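/- Every finite set V ⊆ ℝ² with |V| ≥ 3 whose points do not all lie on a single line is the vertex set of a simple polygon (i.e., V admits a simple polygonization). -/

import Mathlib

noncomputable section

/-- A point of the plane. -/
abbrev Pt : Type := ℝ × ℝ

/-- The closed segment with endpoints `a` and `b`. -/
def Seg (a b : Pt) : Set Pt := segment ℝ a b

/-- The set of endpoints of the segments of a family `S`. -/
def SegEndpoints (S : Finset (Pt × Pt)) : Set Pt :=
  ⋃ s ∈ (S : Set (Pt × Pt)), ({s.1, s.2} : Set Pt)

/-- `S` is a family of (nondegenerate) pairwise disjoint segments. -/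
def DisjointFamily (S : Finset (Pt × Pt)) : Prop :=
  (∀ s ∈ S, s.1 ≠ s.2) ∧
  (S : Set (Pt × Pt)).Pairwise (fun s t => Disjoint (Seg s.1 s.2) (Seg t.1 t.2))

/-- No three endpoints of segments of `S` are collinear. -/
def GeneralPosition (S : Finset (Pt × Pt)) : Prop :=
  ∀ p ∈ SegEndpoints S, ∀ q ∈ SegEndpoints S, ∀ r ∈ SegEndpoints S,
    p ≠ q → p ≠ r → q ≠ r → ¬ Collinear ℝ ({p, q, r} : Set Pt)

/-- A simple polygon: a cyclic sequence of `k ≥ 3` pairwise distinct vertices such that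
two edges intersect iff they are consecutive, and consecutive edges meet exactly in
their common endpoint. -/
structure SimplePolygon : Type where
  k : ℕ
  three_le : 3 ≤ k
  vtx : ZMod k → Pt
  inj : Function.Injective vtx
  edge_inter : ∀ i j : ZMod k, i ≠ j →
    ((Seg (vtx i) (vtx (i + 1)) ∩ Seg (vtx j) (vtx (j + 1))).Nonempty ↔
      (j = i + 1 ∨ i = j + 1))
  edge_consec : ∀ i : ZMod k,
    Seg (vtx i) (vtx (i + 1)) ∩ Seg (vtx (i + 1)) (vtx (i + 2)) = {vtx (i + 1)}

/-- The union of the edges of a simple polygon. -/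
def SimplePolygon.edgeUnion (P : SimplePolygon) : Set Pt :=
  ⋃ i : ZMod P.k, Seg (P.vtx i) (P.vtx (i + 1))

/-- The closed region of a simple polygon: the union of its edges together with all
bounded connected components of the complement of the union of the edges. -/
def SimplePolygon.closedRegion (P : SimplePolygon) : Set Pt :=
  P.edgeUnion ∪
    {x | x ∉ P.edgeUnion ∧ Bornology.IsBounded (connectedComponentIn (P.edgeUnion)ᶜ x)}

/-- `P` is a circumscribing polygon for `S`: its vertex set is exactly the set of
endpoints of segments of `S`, and every segment of `S` lies in the closed region of `P`. -/
def IsCircumscribing (S : Finset (Pt × Pt)) (P : SimplePolygon) : Prop :=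
  Set.range P.vtx = SegEndpoints S ∧ ∀ s ∈ S, Seg s.1 s.2 ⊆ P.closedRegion



def Aff (h : Pt → ℝ) : Prop :=
  ∀ a b : Pt, ∀ u v : ℝ, u + v = 1 → h (u • a + v • b) = u * h a + v * h b

lemma mem_seg {a b z : Pt} :
    z ∈ Seg a b ↔ ∃ u v : ℝ, 0 ≤ u ∧ 0 ≤ v ∧ u + v = 1 ∧ u • a + v • b = z := Iff.rfl

lemma seg_le {h : Pt → ℝ} (hh : Aff h) {a b z : Pt} {M : ℝ}
    (ha : h a ≤ M) (hb : h b ≤ M) (hz : z ∈ Seg a b) : h z ≤ M := by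
  obtain ⟨u, v, hu, hv, huv, rfl⟩ := mem_seg.1 hz
  rw [hh a b u v huv]
  have hM : u * M + v * M = M := by linear_combination M * huv
  nlinarith [mul_le_mul_of_nonneg_left ha hu, mul_le_mul_of_nonneg_left hb hv]

lemma seg_ge {h : Pt → ℝ} (hh : Aff h) {a b z : Pt} {M : ℝ}
    (ha : M ≤ h a) (hb : M ≤ h b) (hz : z ∈ Seg a b) : M ≤ h z := by
  obtain ⟨u, v, hu, hv, huv, rfl⟩ := mem_seg.1 hz
  rw [hh a b u v huv]
  have hM : u * M + v * M = M := by linear_combination M * huv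
  nlinarith [mul_le_mul_of_nonneg_left ha hu, mul_le_mul_of_nonneg_left hb hv]

lemma seg_pos {h : Pt → ℝ} (hh : Aff h) {a b z : Pt}
    (ha : 0 < h a) (hb : 0 < h b) (hz : z ∈ Seg a b) : 0 < h z := by
  obtain ⟨u, v, hu, hv, huv, rfl⟩ := mem_seg.1 hz
  rw [hh a b u v huv]
  rcases eq_or_lt_of_le hu with h0 | h0
  · have : v = 1 := by linarith
    rw [← h0, this]; simpa using hb
  · nlinarith

lemma seg_eq_left {h : Pt → ℝ} (hh : Aff h) {a b z : Pt}
    (hz : z ∈ Seg a b) (hne : h a ≠ h b) (heq : h z = h a) : z = a := by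
  obtain ⟨u, v, hu, hv, huv, rfl⟩ := mem_seg.1 hz
  rw [hh a b u v huv] at heq
  have hv0 : v = 0 := by
    by_contra hv0
    have : v * (h b - h a) = 0 := by linear_combination heq - h a * huv
    rcases mul_eq_zero.1 this with h1 | h1
    · exact hv0 h1
    · exact hne (by linarith)
  have hu1 : u = 1 := by linarith
  rw [hv0, hu1]; simp

lemma seg_eq_right {h : Pt → ℝ} (hh : Aff h) {a b z : Pt}
    (hz : z ∈ Seg a b) (hne : h a ≠ h b) (heq : h z = h b) : z = b := by
  have hz' : z ∈ Seg b a := by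
    rw [Seg, segment_symm]; exact hz
  exact seg_eq_left hh hz' (Ne.symm hne) heq

lemma key
    {k m : ℕ} (hk : 3 ≤ k) (hm : 2 ≤ m) (hmk : m < k)
    {w : ℕ → Pt} (hper : ∀ n, w n = w (n % k))
    {f g : Pt → ℝ} (hf : Aff f) (hg : Aff g)
    (hfa : ∀ i j, i < j → j < m → f (w i) < f (w j))
    (hfd : ∀ i j, m - 1 ≤ i → i < j → j ≤ k → f (w j) < f (w i))
    (hgA : ∀ i, i < m → g (w i) ≤ 0)
    (hgp : g (w 0) = 0)
    (hgq : g (w (m - 1)) = 0)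
    (hgB : ∀ i, m ≤ i → i < k → 0 < g (w i)) :
    (∀ a b, a < b → b < k →
      ((Seg (w a) (w (a+1)) ∩ Seg (w b) (w (b+1))).Nonempty →
        (b = a + 1 ∨ (a = 0 ∧ b = k - 1)))) ∧
    (∀ a, a < k → Seg (w a) (w (a+1)) ∩ Seg (w (a+1)) (w (a+2)) = {w (a+1)}) ∧
    (∀ a b, a < b → b < k → w a ≠ w b) := by
  have hwk : w k = w 0 := by rw [hper k, Nat.mod_self]
  have hgk : g (w k) = 0 := by rw [hwk]; exact hgp
  refine ⟨?_, ?_, ?_⟩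
  · -- forward intersection
    rintro a b hab hbk ⟨z, hza, hzb⟩
    by_cases ha' : a + 1 < m
    · by_cases hb' : b + 1 < m
      · -- both ascending
        left
        have h1 : f z ≤ f (w (a+1)) :=
          seg_le hf (le_of_lt (hfa a (a+1) (by omega) ha')) le_rfl hza
        have h2 : f (w b) ≤ f z :=
          seg_ge hf le_rfl (le_of_lt (hfa b (b+1) (by omega) hb')) hzb
        by_contra hne
        have hlt : a + 1 < b := by omega
        exact absurd (hfa (a+1) b hlt (by omega)) (not_lt.2 (h2.trans h1))
      · -- a ascending, b descending
        have hbm : m - 1 ≤ b := by omega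
        have hga : g z ≤ 0 := seg_le hg (hgA a (by omega)) (hgA (a+1) ha') hza
        have hgb1 : 0 ≤ g (w b) := by
          rcases eq_or_lt_of_le hbm with h | h
          · rw [← h]; exact le_of_eq hgq.symm
          · exact le_of_lt (hgB b (by omega) hbk)
        have hgb2 : 0 ≤ g (w (b+1)) := by
          rcases Nat.lt_or_ge (b+1) k with h | h
          · exact le_of_lt (hgB (b+1) (by omega) h)
          · have hb1 : b + 1 = k := by omega
            rw [hb1]; exact le_of_eq hgk.symm
        have hz0 : g z = 0 := le_antisymm hga (seg_ge hg hgb1 hgb2 hzb)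
        rcases eq_or_lt_of_le hbm with hbq | hbB
        · -- b = m - 1
          left
          have hb1 : b + 1 < k := by omega
          have hgbpos : 0 < g (w (b+1)) := hgB (b+1) (by omega) hb1
          have hgwb : g (w b) = 0 := by rw [← hbq]; exact hgq
          have hzq : z = w b := by
            apply seg_eq_left hg hzb
            · rw [hgwb]; exact ne_of_lt hgbpos
            · rw [hz0, hgwb]
          have h1 : f z ≤ f (w (a+1)) :=
            seg_le hf (le_of_lt (hfa a (a+1) (by omega) ha')) le_rfl hza
          by_contra hne
          have hlt : a + 1 < m - 1 := by omega
          have h2 : f (w (a+1)) < f (w (m-1)) := hfa (a+1) (m-1) hlt (by omega)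
          rw [hbq] at h2
          rw [hzq] at h1
          exact absurd h2 (not_lt.2 h1)
        · -- m ≤ b
          have hmb : m ≤ b := by omega
          rcases Nat.lt_or_ge (b+1) k with hbk' | hbk'
          · exact absurd (seg_pos hg (hgB b hmb hbk) (hgB (b+1) (by omega) hbk') hzb)
              (not_lt.2 hga)
          · -- b + 1 = k
            right
            have hb1 : b + 1 = k := by omega
            have hgwb1 : g (w (b+1)) = 0 := by rw [hb1]; exact hgk
            have hzp : z = w (b+1) := by
              apply seg_eq_right hg hzb
              · rw [hgwb1]; exact ne_of_gt (hgB b hmb hbk)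
              · rw [hz0, hgwb1]
            have h2 : f (w a) ≤ f z :=
              seg_ge hf le_rfl (le_of_lt (hfa a (a+1) (by omega) ha')) hza
            rw [hzp, hb1, hwk] at h2
            constructor
            · by_contra hne
              exact absurd (hfa 0 a (by omega) (by omega)) (not_lt.2 h2)
            · omega
    · -- both descending : m - 1 ≤ a < b
      left
      have ham : m - 1 ≤ a := by omega
      have h1 : f (w (a+1)) ≤ f z :=
        seg_ge hf (le_of_lt (hfd a (a+1) ham (by omega) (by omega))) le_rfl hza
      have h2 : f z ≤ f (w b) :=
        seg_le hf le_rfl (le_of_lt (hfd b (b+1) (by omega) (by omega) (by omega))) hzb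
      by_contra hne
      have hlt : a + 1 < b := by omega
      exact absurd (hfd (a+1) b (by omega) hlt (by omega)) (not_lt.2 (h1.trans h2))
  · -- consecutive edges
    intro a hak
    apply Set.eq_singleton_iff_unique_mem.2
    constructor
    · exact ⟨right_mem_segment ℝ _ _, left_mem_segment ℝ _ _⟩
    · rintro z ⟨hz1, hz2⟩
      by_cases h2m : a + 2 < m
      · -- both ascending
        have h1 : f z ≤ f (w (a+1)) :=
          seg_le hf (le_of_lt (hfa a (a+1) (by omega) (by omega))) le_rfl hz1
        have h2 : f (w (a+1)) ≤ f z :=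
          seg_ge hf le_rfl (le_of_lt (hfa (a+1) (a+2) (by omega) h2m)) hz2
        exact seg_eq_right hf hz1 (ne_of_lt (hfa a (a+1) (by omega) (by omega)))
          (le_antisymm h1 h2)
      · by_cases h1m : a + 1 < m
        · -- a = m - 2
          have ha : a + 1 = m - 1 := by omega
          have hga : g z ≤ 0 := seg_le hg (hgA a (by omega)) (hgA (a+1) h1m) hz1
          have hgnext : 0 < g (w (a+2)) := hgB (a+2) (by omega) (by omega)
          have hgmid : g (w (a+1)) = 0 := by rw [ha]; exact hgq
          have hgz : 0 ≤ g z := seg_ge hg (le_of_eq hgmid.symm) (le_of_lt hgnext) hz2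
          exact seg_eq_left hg hz2 (by rw [hgmid]; exact ne_of_lt hgnext)
            (by rw [hgmid]; exact le_antisymm hga hgz)
        · -- m ≤ a + 1
          by_cases hak' : a + 1 < k
          · -- both descending
            have h1 : f (w (a+1)) ≤ f z :=
              seg_ge hf (le_of_lt (hfd a (a+1) (by omega) (by omega) (by omega))) le_rfl hz1
            have h2 : f z ≤ f (w (a+1)) :=
              seg_le hf le_rfl (le_of_lt (hfd (a+1) (a+2) (by omega) (by omega) (by omega))) hz2
            exact seg_eq_left hf hz2
              (ne_of_gt (hfd (a+1) (a+2) (by omega) (by omega) (by omega)))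
              (le_antisymm h2 h1)
          · -- a = k - 1
            have ha : a + 1 = k := by omega
            have hw2 : w (a + 2) = w 1 := by
              rw [hper (a+2)]
              congr 1
              have : a + 2 = 1 + 1 * k := by omega
              rw [this, Nat.add_mul_mod_self_right]
              exact Nat.mod_eq_of_lt (by omega)
            have hgprev : 0 < g (w a) := hgB a (by omega) (by omega)
            have hgend : g (w (a+1)) = 0 := by rw [ha]; exact hgk
            have hgz1 : 0 ≤ g z := seg_ge hg (le_of_lt hgprev) (le_of_eq hgend.symm) hz1
            have hgz2 : g z ≤ 0 := by
              apply seg_le hg (le_of_eq hgend) _ hz2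
              rw [hw2]; exact hgA 1 (by omega)
            exact seg_eq_right hg hz1 (by rw [hgend]; exact ne_of_gt hgprev)
              (by rw [hgend]; exact le_antisymm hgz2 hgz1)
  · -- injectivity
    intro a b hab hbk
    by_cases hbm : b < m
    · exact fun h => absurd (hfa a b hab hbm) (by rw [h]; exact lt_irrefl _)
    · by_cases ham : a < m
      · intro h
        have h1 : g (w a) ≤ 0 := hgA a ham
        have h2 : 0 < g (w b) := hgB b (by omega) hbk
        rw [h] at h1; exact absurd h2 (not_lt.2 h1)
      · exact fun h => absurd (hfd a b (by omega) hab (by omega)) (by rw [h]; exact lt_irrefl _)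

lemma aff_of_coeffs (α β γ : ℝ) : Aff (fun z : Pt => α * z.1 + β * z.2 + γ) := by
  intro a b u v huv
  simp only [Prod.fst_add, Prod.snd_add, Prod.smul_fst, Prod.smul_snd, smul_eq_mul]
  linear_combination (-γ) * huv


/-- Every finite set of at least 3 points in the plane, not all collinear,
is the vertex set of a simple polygon. -/
theorem exists_simple_polygonization (V : Finset Pt) (hV : 3 ≤ V.card)
    (hnc : ¬ Collinear ℝ (V : Set Pt)) :
    ∃ P : SimplePolygon, Set.range P.vtx = (V : Set Pt) := by
  classical
  have hVne : V.Nonempty := Finset.card_pos.1 (by omega)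
  -- choose a shear coefficient making the first coordinate injective on V
  obtain ⟨c, hc⟩ : ∃ c : ℝ, ∀ u ∈ V, ∀ v ∈ V, u.1 + c * u.2 = v.1 + c * v.2 → u = v := by
    obtain ⟨c, hcm⟩ := Infinite.exists_notMem_finset
      ((V ×ˢ V).image fun uv => (uv.2.1 - uv.1.1) / (uv.1.2 - uv.2.2))
    refine ⟨c, fun u hu v hv h => ?_⟩
    rcases eq_or_ne u.2 v.2 with h2 | h2
    · have h1 : u.1 = v.1 := by rw [h2] at h; linarith
      exact Prod.ext h1 h2
    · exfalso
      apply hcm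
      refine Finset.mem_image.2 ⟨(u, v), Finset.mem_product.2 ⟨hu, hv⟩, ?_⟩
      have h2' : u.2 - v.2 ≠ 0 := sub_ne_zero.2 h2
      rw [div_eq_iff h2']
      linarith
  set f : Pt → ℝ := fun z => z.1 + c * z.2 with hf_def
  have hfaff : Aff f := by
    intro a b u v huv
    have H := aff_of_coeffs 1 c 0 a b u v huv
    simp only at H
    simpa [hf_def, one_mul, add_zero] using H
  obtain ⟨p, hpV, hpmin'⟩ := V.exists_min_image f hVne
  obtain ⟨q, hqV, hqmax'⟩ := V.exists_max_image f hVne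
  have hpq : f p < f q := by
    obtain ⟨u, hu, v, hv, huv⟩ := Finset.one_lt_card.1 (by omega : 1 < V.card)
    have hne : f u ≠ f v := fun h => huv (hc u hu v hv h)
    rcases hne.lt_or_gt with h | h
    · exact lt_of_le_of_lt (hpmin' u hu) (lt_of_lt_of_le h (hqmax' v hv))
    · exact lt_of_le_of_lt (hpmin' v hv) (lt_of_lt_of_le h (hqmax' u hu))
  have hpqne : p ≠ q := fun h => absurd hpq (by rw [h]; exact lt_irrefl _)
  have hpmin : ∀ v ∈ V, v ≠ p → f p < f v := fun v hv hne =>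
    lt_of_le_of_ne (hpmin' v hv) (fun h => hne (hc v hv p hpV h.symm))
  have hqmax : ∀ v ∈ V, v ≠ q → f v < f q := fun v hv hne =>
    lt_of_le_of_ne (hqmax' v hv) (fun h => hne (hc v hv q hqV h))
  -- the line functional through p and q
  set g0 : Pt → ℝ := fun z => (q.1 - p.1) * (z.2 - p.2) - (q.2 - p.2) * (z.1 - p.1) with hg0_def
  have hex : ∃ v ∈ V, g0 v ≠ 0 := by
    by_contra hcon
    push_neg at hcon
    apply hnc
    rw [collinear_iff_of_mem (Finset.mem_coe.2 hpV)]
    refine ⟨q - p, fun x hx => ?_⟩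
    have hx0 : g0 x = 0 := hcon x (Finset.mem_coe.1 hx)
    simp only [hg0_def] at hx0
    by_cases h1 : q.1 - p.1 = 0
    · have h2 : q.2 - p.2 ≠ 0 := by
        intro h2
        apply hpqne
        have e1 : p.1 = q.1 := by linarith
        have e2 : p.2 = q.2 := by linarith
        exact Prod.ext e1 e2
      refine ⟨(x.2 - p.2) / (q.2 - p.2), ?_⟩
      have hx1 : x.1 = p.1 := by
        have h3 : (q.2 - p.2) * (x.1 - p.1) = 0 := by rw [h1] at hx0; linarith
        rcases mul_eq_zero.1 h3 with h | h
        · exact absurd h h2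
        · linarith
      rw [vadd_eq_add]
      apply Prod.ext
      · simp only [Prod.fst_add, Prod.smul_fst, Prod.fst_sub, smul_eq_mul]
        rw [h1]
        simpa using hx1
      · simp only [Prod.snd_add, Prod.smul_snd, Prod.snd_sub, smul_eq_mul]
        rw [div_mul_cancel₀ _ h2]
        ring
    · refine ⟨(x.1 - p.1) / (q.1 - p.1), ?_⟩
      rw [vadd_eq_add]
      apply Prod.ext
      · simp only [Prod.fst_add, Prod.smul_fst, Prod.fst_sub, smul_eq_mul]
        rw [div_mul_cancel₀ _ h1]
        ring
      · simp only [Prod.snd_add, Prod.smul_snd, Prod.snd_sub, smul_eq_mul]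
        field_simp
        linear_combination hx0
  obtain ⟨v0, hv0V, hv0⟩ := hex
  set s : ℝ := if 0 < g0 v0 then 1 else -1 with hs_def
  set g : Pt → ℝ := fun z => s * g0 z with hg_def
  have hgaff : Aff g := by
    intro a b u v huv
    have H := aff_of_coeffs (s * (p.2 - q.2)) (s * (q.1 - p.1))
      (s * ((q.2 - p.2) * p.1 - (q.1 - p.1) * p.2)) a b u v huv
    simp only at H
    have e : ∀ z : Pt, g z = s * (p.2 - q.2) * z.1 + s * (q.1 - p.1) * z.2 +
        s * ((q.2 - p.2) * p.1 - (q.1 - p.1) * p.2) := by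
      intro z; simp only [hg_def, hg0_def]; ring
    rw [e, e, e]
    exact H
  have hgp0 : g p = 0 := by simp only [hg_def, hg0_def]; ring
  have hgq0 : g q = 0 := by simp only [hg_def, hg0_def]; ring
  have hgv0 : 0 < g v0 := by
    by_cases h : 0 < g0 v0
    · simp only [hg_def, hs_def, if_pos h]; linarith
    · have h' : g0 v0 < 0 := lt_of_le_of_ne (not_lt.1 h) hv0
      simp only [hg_def, hs_def, if_neg h]; linarith
  -- partition V
  set B : Finset Pt := V.filter (fun v => 0 < g v) with hB_def
  set A : Finset Pt := V.filter (fun v => ¬ 0 < g v) with hA_def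
  have hAV : A ⊆ V := Finset.filter_subset _ _
  have hBV : B ⊆ V := Finset.filter_subset _ _
  have hpA : p ∈ A := Finset.mem_filter.2 ⟨hpV, by rw [hgp0]; exact lt_irrefl 0⟩
  have hqA : q ∈ A := Finset.mem_filter.2 ⟨hqV, by rw [hgq0]; exact lt_irrefl 0⟩
  have hv0B : v0 ∈ B := Finset.mem_filter.2 ⟨hv0V, hgv0⟩
  set m := A.card with hm_def
  set l := B.card with hl_def
  set k := V.card with hk_def
  have hkml : l + m = k := Finset.card_filter_add_card_filter_not (p := fun v => 0 < g v)
  have hm2 : 2 ≤ m := Finset.one_lt_card.2 ⟨p, hpA, q, hqA, hpqne⟩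
  have hl1 : 1 ≤ l := Finset.card_pos.2 ⟨v0, hv0B⟩
  have hmk : m < k := by omega
  have hk3 : 3 ≤ k := hV
  -- inverse of f on V
  set φ : ℝ → Pt := Function.invFunOn f ↑V with hφ_def
  have hφ : ∀ a ∈ V, φ (f a) = a := by
    intro a ha
    have hex' : ∃ x ∈ (↑V : Set Pt), f x = f a := ⟨a, Finset.mem_coe.2 ha, rfl⟩
    have h1 : f (φ (f a)) = f a := Function.invFunOn_eq hex'
    have h2 : φ (f a) ∈ (↑V : Set Pt) := Function.invFunOn_mem hex'
    exact hc _ (Finset.mem_coe.1 h2) a ha h1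
  -- order isomorphisms
  have hAcard : (A.image f).card = m :=
    Finset.card_image_of_injOn (fun u hu v hv h => hc u (hAV hu) v (hAV hv) h)
  have hBcard : (B.image f).card = l :=
    Finset.card_image_of_injOn (fun u hu v hv h => hc u (hBV hu) v (hBV hv) h)
  set eA := (A.image f).orderIsoOfFin hAcard with heA_def
  set eB := (B.image f).orderIsoOfFin hBcard with heB_def
  set wA : Fin m → Pt := fun t => φ (eA t) with hwA_def
  set wB : Fin l → Pt := fun t => φ (eB t) with hwB_def
  have hwAm : ∀ t : Fin m, wA t ∈ A ∧ f (wA t) = (eA t : ℝ) := by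
    intro t
    obtain ⟨a, haA, hfa'⟩ := Finset.mem_image.1 (eA t).2
    have he : wA t = a := by rw [hwA_def]; simp only; rw [← hfa']; exact hφ a (hAV haA)
    rw [he, hfa']
    exact ⟨haA, rfl⟩
  have hwBm : ∀ t : Fin l, wB t ∈ B ∧ f (wB t) = (eB t : ℝ) := by
    intro t
    obtain ⟨a, haB, hfa'⟩ := Finset.mem_image.1 (eB t).2
    have he : wB t = a := by rw [hwB_def]; simp only; rw [← hfa']; exact hφ a (hBV haB)
    rw [he, hfa']
    exact ⟨haB, rfl⟩
  have hwAsurj : ∀ a ∈ A, ∃ t, wA t = a := by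
    intro a ha
    obtain ⟨t, ht⟩ := eA.surjective ⟨f a, Finset.mem_image_of_mem f ha⟩
    refine ⟨t, ?_⟩
    rw [hwA_def]; simp only
    rw [show ((eA t : ℝ)) = f a from congrArg Subtype.val ht]
    exact hφ a (hAV ha)
  have hwBsurj : ∀ a ∈ B, ∃ t, wB t = a := by
    intro a ha
    obtain ⟨t, ht⟩ := eB.surjective ⟨f a, Finset.mem_image_of_mem f ha⟩
    refine ⟨t, ?_⟩
    rw [hwB_def]; simp only
    rw [show ((eB t : ℝ)) = f a from congrArg Subtype.val ht]
    exact hφ a (hBV ha)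
  have hAmono : ∀ t u : Fin m, t < u → f (wA t) < f (wA u) := by
    intro t u h
    rw [(hwAm t).2, (hwAm u).2]
    exact_mod_cast eA.lt_iff_lt.2 h
  have hBmono : ∀ t u : Fin l, t < u → f (wB t) < f (wB u) := by
    intro t u h
    rw [(hwBm t).2, (hwBm u).2]
    exact_mod_cast eB.lt_iff_lt.2 h
  -- the cyclic vertex function
  have hl' : ∀ n : ℕ, ¬ n % k < m → k - 1 - n % k < l := by
    intro n h
    have := Nat.mod_lt n (show 0 < k by omega)
    omega
  set w : ℕ → Pt := fun n =>
    if h : n % k < m then wA ⟨n % k, h⟩ else wB ⟨k - 1 - n % k, hl' n h⟩ with hw_def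
  have hmodk : ∀ n : ℕ, n % k % k = n % k := fun n => Nat.mod_mod_of_dvd n dvd_rfl
  have hper : ∀ n, w n = w (n % k) := by
    intro n
    rw [hw_def]
    simp only [hmodk]
  have hwa : ∀ n, ∀ h : n < m, w n = wA ⟨n, h⟩ := by
    intro n h
    have hnk : n % k = n := Nat.mod_eq_of_lt (by omega)
    rw [hw_def]
    simp only [hnk, dif_pos h]
  have hwb : ∀ n, m ≤ n → n < k → ∃ h' : k - 1 - n < l, w n = wB ⟨k - 1 - n, h'⟩ := by
    intro n h1 h2
    have hnk : n % k = n := Nat.mod_eq_of_lt h2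
    refine ⟨by omega, ?_⟩
    rw [hw_def]
    simp only [hnk, dif_neg (by omega : ¬ n < m)]
  have hwk0 : w k = w 0 := by rw [hper k, Nat.mod_self]
  -- membership facts
  have hwinA : ∀ n, n < m → w n ∈ A := by
    intro n h
    rw [hwa n h]
    exact (hwAm _).1
  have hwinB : ∀ n, m ≤ n → n < k → w n ∈ B := by
    intro n h1 h2
    obtain ⟨h', he⟩ := hwb n h1 h2
    rw [he]
    exact (hwBm _).1
  -- ascending chain
  have hfa : ∀ i j, i < j → j < m → f (w i) < f (w j) := by
    intro i j hij hjm
    rw [hwa i (by omega), hwa j hjm]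
    exact hAmono _ _ (by exact Fin.mk_lt_mk.2 hij)
  -- endpoints of the lower chain
  have hw0 : w 0 = p := by
    have h0m : 0 < m := by omega
    rw [hwa 0 h0m]
    have h1 : f (wA ⟨0, h0m⟩) = (eA ⟨0, h0m⟩ : ℝ) := (hwAm _).2
    obtain ⟨t0, ht0⟩ := eA.surjective ⟨f p, Finset.mem_image_of_mem f hpA⟩
    have hle : (eA ⟨0, h0m⟩ : ℝ) ≤ f p := by
      rw [show f p = (eA t0 : ℝ) from (congrArg Subtype.val ht0).symm]
      exact_mod_cast eA.le_iff_le.2 (by exact Fin.mk_le_mk.2 (Nat.zero_le _))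
    have hge : f p ≤ (eA ⟨0, h0m⟩ : ℝ) := by
      obtain ⟨a, haA, hfa'⟩ := Finset.mem_image.1 (eA ⟨0, h0m⟩).2
      rw [← hfa']
      exact hpmin' a (hAV haA)
    exact hc _ (hAV (hwAm ⟨0, h0m⟩).1) p hpV
      (show f (wA ⟨0, h0m⟩) = f p by rw [h1]; linarith)
  have hwm1 : w (m - 1) = q := by
    have hm1 : m - 1 < m := by omega
    rw [hwa (m-1) hm1]
    have h1 : f (wA ⟨m-1, hm1⟩) = (eA ⟨m-1, hm1⟩ : ℝ) := (hwAm _).2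
    obtain ⟨t0, ht0⟩ := eA.surjective ⟨f q, Finset.mem_image_of_mem f hqA⟩
    have hle : f q ≤ (eA ⟨m-1, hm1⟩ : ℝ) := by
      rw [show f q = (eA t0 : ℝ) from (congrArg Subtype.val ht0).symm]
      exact_mod_cast eA.le_iff_le.2 (by exact Fin.mk_le_mk.2 (by omega : t0.1 ≤ m - 1))
    have hge : (eA ⟨m-1, hm1⟩ : ℝ) ≤ f q := by
      obtain ⟨a, haA, hfa'⟩ := Finset.mem_image.1 (eA ⟨m-1, hm1⟩).2
      rw [← hfa']
      exact hqmax' a (hAV haA)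
    exact hc _ (hAV (hwAm ⟨m-1, hm1⟩).1) q hqV
      (show f (wA ⟨m-1, hm1⟩) = f q by rw [h1]; linarith)
  -- strict bounds for points of B
  have hfB : ∀ n, m ≤ n → n < k → f p < f (w n) ∧ f (w n) < f q := by
    intro n h1 h2
    have hB' : w n ∈ B := hwinB n h1 h2
    have hgw : 0 < g (w n) := (Finset.mem_filter.1 hB').2
    have hV' : w n ∈ V := hBV hB'
    constructor
    · exact hpmin _ hV' (fun h => by rw [h, hgp0] at hgw; exact lt_irrefl _ hgw)
    · exact hqmax _ hV' (fun h => by rw [h, hgq0] at hgw; exact lt_irrefl _ hgw)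
  -- descending chain
  have hfd : ∀ i j, m - 1 ≤ i → i < j → j ≤ k → f (w j) < f (w i) := by
    intro i j h1 h2 h3
    rcases eq_or_lt_of_le h1 with hi | hi
    · rw [← hi, hwm1]
      rcases eq_or_lt_of_le h3 with hj | hj
      · rw [hj, hwk0, hw0]; exact hpq
      · exact (hfB j (by omega) hj).2
    · rcases eq_or_lt_of_le h3 with hj | hj
      · rw [hj, hwk0, hw0]
        exact (hfB i (by omega) (by omega)).1
      · obtain ⟨hi', hei⟩ := hwb i (by omega) (by omega)
        obtain ⟨hj', hej⟩ := hwb j (by omega) hj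
        rw [hei, hej]
        exact hBmono _ _ (by exact Fin.mk_lt_mk.2 (by omega))
  -- g side conditions
  have hgA' : ∀ i, i < m → g (w i) ≤ 0 := by
    intro i h
    exact not_lt.1 (Finset.mem_filter.1 (hwinA i h)).2
  have hgp' : g (w 0) = 0 := by rw [hw0]; exact hgp0
  have hgq' : g (w (m - 1)) = 0 := by rw [hwm1]; exact hgq0
  have hgB' : ∀ i, m ≤ i → i < k → 0 < g (w i) := by
    intro i h1 h2
    exact (Finset.mem_filter.1 (hwinB i h1 h2)).2
  obtain ⟨K1, K2, K3⟩ := key hk3 hm2 hmk hper hfaff hgaff hfa hfd hgA' hgp' hgq' hgB'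
  haveI : NeZero k := ⟨by omega⟩
  haveI : Fact (1 < k) := ⟨by omega⟩
  have hvallt : ∀ i : ZMod k, i.val < k := fun i => ZMod.val_lt i
  have hvinj : ∀ i j : ZMod k, i.val = j.val → i = j := fun i j h => ZMod.val_injective k h
  have hval1 : ∀ i : ZMod k, (i + 1).val = (i.val + 1) % k := by
    intro i
    rw [ZMod.val_add, ZMod.val_one]
  have hval2 : ((2 : ZMod k)).val = 2 := by
    rw [show (2 : ZMod k) = ((2 : ℕ) : ZMod k) by norm_cast]
    exact ZMod.val_cast_of_lt (by omega)
  have hwadd1 : ∀ i : ZMod k, w ((i + 1).val) = w (i.val + 1) := by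
    intro i
    rw [hval1, ← hper]
  have hwadd2 : ∀ i : ZMod k, w ((i + 2).val) = w (i.val + 2) := by
    intro i
    rw [ZMod.val_add, hval2, ← hper]
  refine ⟨⟨k, hk3, fun i => w i.val, ?_, ?_, ?_⟩, ?_⟩
  · -- injectivity
    intro i j h
    simp only at h
    rcases lt_trichotomy i.val j.val with hlt | heq | hgt
    · exact absurd h (K3 _ _ hlt (hvallt j))
    · exact hvinj _ _ heq
    · exact absurd h.symm (K3 _ _ hgt (hvallt i))
  · -- edge_inter
    intro i j hij
    rw [hwadd1 i, hwadd1 j]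
    have hne : i.val ≠ j.val := fun h => hij (hvinj _ _ h)
    constructor
    · rintro ⟨z, hz1, hz2⟩
      rcases lt_or_gt_of_ne hne with h | h
      · rcases K1 i.val j.val h (hvallt j) ⟨z, hz1, hz2⟩ with h1 | ⟨h1, h2⟩
        · left
          apply hvinj
          rw [hval1, h1, Nat.mod_eq_of_lt (by rw [← h1]; exact hvallt j)]
        · right
          apply hvinj
          rw [hval1, h1, h2, Nat.sub_add_cancel (by omega : 1 ≤ k), Nat.mod_self]
      · rcases K1 j.val i.val h (hvallt i) ⟨z, hz2, hz1⟩ with h1 | ⟨h1, h2⟩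
        · right
          apply hvinj
          rw [hval1, h1, Nat.mod_eq_of_lt (by rw [← h1]; exact hvallt i)]
        · left
          apply hvinj
          rw [hval1, h1, h2, Nat.sub_add_cancel (by omega : 1 ≤ k), Nat.mod_self]
    · rintro (h | h)
      · have e : w j.val = w (i.val + 1) := by
          rw [h, hval1, ← hper]
        refine ⟨w j.val, ?_, left_mem_segment ℝ _ _⟩
        rw [e]
        exact right_mem_segment ℝ _ _
      · have e : w i.val = w (j.val + 1) := by
          rw [h, hval1, ← hper]
        refine ⟨w i.val, left_mem_segment ℝ _ _, ?_⟩
        rw [e]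
        exact right_mem_segment ℝ _ _
  · -- edge_consec
    intro i
    rw [hwadd1 i, hwadd2 i]
    exact K2 i.val (hvallt i)
  · -- range
    ext x
    simp only [Set.mem_range]
    constructor
    · rintro ⟨i, rfl⟩
      by_cases h' : i.val < m
      · exact Finset.mem_coe.2 (hAV (hwinA i.val h'))
      · exact Finset.mem_coe.2 (hBV (hwinB i.val (by omega) (hvallt i)))
    · intro hx
      by_cases hgx : 0 < g x
      · obtain ⟨t, ht⟩ := hwBsurj x (Finset.mem_filter.2 ⟨Finset.mem_coe.1 hx, hgx⟩)
        have ht2 := t.2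
        have h1 : m ≤ k - 1 - t.1 := by omega
        have h2 : k - 1 - t.1 < k := by omega
        obtain ⟨h', he⟩ := hwb (k - 1 - t.1) h1 h2
        refine ⟨((k - 1 - t.1 : ℕ) : ZMod k), ?_⟩
        rw [ZMod.val_cast_of_lt h2, he]
        rw [show (⟨k - 1 - (k - 1 - t.1), h'⟩ : Fin l) = t from Fin.ext (by simp only; omega)]
        exact ht
      · obtain ⟨t, ht⟩ := hwAsurj x (Finset.mem_filter.2 ⟨Finset.mem_coe.1 hx, hgx⟩)
        have ht2 := t.2
        refine ⟨((t.1 : ℕ) : ZMod k), ?_⟩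
        rw [ZMod.val_cast_of_lt (by omega), hwa t.1 ht2]
        rw [show (⟨t.1, ht2⟩ : Fin m) = t from Fin.ext rfl]
        exact ht
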